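/- Let Λ be a finite dimensional algebra, M a generator, X a Λ-module, and g: M_X → X a right minimal add(M)-approximation. Then g is surjective, and for every n ≥ 1 the n-th syzygy of Hom_Λ(M,X) over End_Λ(M) is isomorphic to Hom_Λ(M, Ω^n_M(X)), where Ω_M(X) = ker g. -/

import Mathlib

open CategoryTheory CategoryTheory.Limits Opposite

universe u

namespace Rigidity

variable (Λ : Type u) [Ring Λ]

/-- `X` belongs to `add M`: it is a direct summand of a finite direct sum of copies of `M`. -/
def InAdd (M X : ModuleCat.{u} Λ) : Prop :=
  ∃ (r : ℕ) (Y : ModuleCat.{u} Λ), Nonempty ((X ⊞ Y) ≅ ⨁ (fun _ : Fin r => M))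

/-- An indecomposable object. -/
def Indec (X : ModuleCat.{u} Λ) : Prop :=
  ¬ IsZero X ∧ ∀ A B : ModuleCat.{u} Λ, Nonempty (X ≅ A ⊞ B) → IsZero A ∨ IsZero B

/-- A generator-cogenerator: `add M` contains the regular module and all
finitely generated injective modules. -/
def IsGenCogen (M : ModuleCat.{u} Λ) : Prop :=
  InAdd Λ M (ModuleCat.of Λ Λ) ∧
  ∀ I : ModuleCat.{u} Λ, Module.Finite Λ I → Injective I → InAdd Λ M I

/-- `g : A ⟶ X` is a right minimal `add M`-approximation. -/
def IsRMApprox (M : ModuleCat.{u} Λ) {A X : ModuleCat.{u} Λ} (g : A ⟶ X) : Prop :=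
  InAdd Λ M A ∧
  (∀ T : ModuleCat.{u} Λ, InAdd Λ M T → ∀ f : T ⟶ X, ∃ h : T ⟶ A, h ≫ g = f) ∧
  (∀ h : A ⟶ A, h ≫ g = g → IsIso h)

/-- `IsMSyzygy M X r W` : `W` is an `r`-th `M`-syzygy `Ω_M^r(X)` of `X`. -/
inductive IsMSyzygy (M : ModuleCat.{u} Λ) : ModuleCat.{u} Λ → ℕ → ModuleCat.{u} Λ → Prop
  | zero (X : ModuleCat.{u} Λ) : IsMSyzygy M X 0 X
  | succ (X : ModuleCat.{u} Λ) (r : ℕ) (W A : ModuleCat.{u} Λ) (g : A ⟶ W)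
      (hW : IsMSyzygy M X r W) (hg : IsRMApprox Λ M g) :
      IsMSyzygy M X (r + 1) (kernel g)

/-- The `M`-dimension of `X` is at most `r`. -/
def MdimLE (M X : ModuleCat.{u} Λ) (r : ℕ) : Prop :=
  ∃ W : ModuleCat.{u} Λ, IsMSyzygy Λ M X r W ∧ InAdd Λ M W

/-- projective dimension at most `r`, via a length `r` projective resolution. -/
def ProjDimLE (A : Type u) [Ring A] (N : ModuleCat.{u} A) (r : ℕ) : Prop :=
  ∃ (P : ℕ → ModuleCat.{u} A) (d : ∀ i : ℕ, P (i + 1) ⟶ P i) (f : P 0 ⟶ N),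
    (∀ i, Projective (P i)) ∧ (∀ i, r < i → IsZero (P i)) ∧ Epi f ∧
    (∃ w : d 0 ≫ f = 0, (ShortComplex.mk (d 0) f w).Exact) ∧
    (∀ i, ∃ w : d (i + 1) ≫ d i = 0, (ShortComplex.mk (d (i + 1)) (d i) w).Exact)

/-- global dimension at most `r`. -/
def GldimLE (A : Type u) [Ring A] (r : ℕ) : Prop :=
  ∀ N : ModuleCat.{u} A, ProjDimLE A N r

/-- the global dimension, as an element of `ℕ∞`. -/
noncomputable def gldim (A : Type u) [Ring A] : ℕ∞ :=
  sInf {c : ℕ∞ | ∃ r : ℕ, c = (r : ℕ∞) ∧ GldimLE A r}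

/-- dominant dimension at least `r`: there is an exact sequence
`0 → A → I^0 → ⋯ → I^(r-1)` with all `I^i` projective-injective. -/
def DomdimGE (A : Type u) [Ring A] (r : ℕ) : Prop :=
  ∃ (I : ℕ → ModuleCat.{u} A) (f : ModuleCat.of A A ⟶ I 0) (g : ∀ i : ℕ, I i ⟶ I (i + 1)),
    Mono f ∧ (∀ i, i < r → Injective (I i) ∧ Projective (I i)) ∧
    (2 ≤ r → ∃ w : f ≫ g 0 = 0, (ShortComplex.mk f (g 0) w).Exact) ∧
    (∀ i, i + 3 ≤ r → ∃ w : g i ≫ g (i + 1) = 0, (ShortComplex.mk (g i) (g (i + 1)) w).Exact)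

/-- the dominant dimension, as an element of `ℕ∞`. -/
noncomputable def domdim (A : Type u) [Ring A] : ℕ∞ :=
  sSup {c : ℕ∞ | ∃ r : ℕ, c = (r : ℕ∞) ∧ DomdimGE A r}

/-- the rigidity degree of a module, as an element of `ℕ∞`. -/
noncomputable def rigDeg [HasExt.{u} (ModuleCat.{u} Λ)] (M : ModuleCat.{u} Λ) : ℕ∞ :=
  sSup {c : ℕ∞ | ∃ r : ℕ, c = (r : ℕ∞) ∧ 0 < r ∧
    ∀ i : ℕ, 1 ≤ i → i ≤ r → Subsingleton (Abelian.Ext M M i)}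

/-- the rigidity dimension. -/
noncomputable def rigdim : ℕ∞ :=
  sSup {c : ℕ∞ | ∃ M : ModuleCat.{u} Λ, Module.Finite Λ M ∧ IsGenCogen Λ M ∧
    (∃ r : ℕ, GldimLE (End (op M)) r) ∧ c = domdim (End (op M))}

/-- An Auslander-Reiten (almost split) sequence. -/
def IsARSeq {X Y Z : ModuleCat.{u} Λ} (f : X ⟶ Y) (g : Y ⟶ Z) : Prop :=
  Mono f ∧ Epi g ∧ (∃ w : f ≫ g = 0, (ShortComplex.mk f g w).Exact) ∧
  Indec Λ X ∧ Indec Λ Z ∧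
  (¬ ∃ s : Z ⟶ Y, s ≫ g = 𝟙 Z) ∧
  (∀ (W : ModuleCat.{u} Λ) (h : W ⟶ Z), (¬ ∃ s : Z ⟶ W, s ≫ h = 𝟙 Z) →
    ∃ h' : W ⟶ Y, h' ≫ g = h)

/-- `X` has composition length `t`. -/
def HasCompLength (X : ModuleCat.{u} Λ) (t : ℕ) : Prop :=
  (∃ c : Fin (t + 1) → Submodule Λ X, StrictMono c ∧ c 0 = ⊥ ∧ c (Fin.last t) = ⊤) ∧
  ∀ r : ℕ, (∃ c : Fin (r + 1) → Submodule Λ X, StrictMono c ∧ c 0 = ⊥ ∧ c (Fin.last r) = ⊤) →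
    r ≤ t


/-- `IsSyz A N r W` : `W` is an `r`-th syzygy of `N` over `A`, i.e. obtained by
taking kernels of projective covers `r` times. -/
inductive IsSyz (A : Type u) [Ring A] : ModuleCat.{u} A → ℕ → ModuleCat.{u} A → Prop
  | zero (N : ModuleCat.{u} A) : IsSyz A N 0 N
  | succ (N : ModuleCat.{u} A) (r : ℕ) (W P : ModuleCat.{u} A) (p : P ⟶ W)
      (hP : Projective P) (hp : Epi p) (hmin : ∀ h : P ⟶ P, h ≫ p = p → IsIso h)
      (hW : IsSyz A N r W) : IsSyz A N (r + 1) (kernel p)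

/-- The `End X`-module structure on `unop X ⟶ Y` for `X : Cᵒᵖ` (as in the older Mathlib),
with `r • f = r.unop ≫ f`. -/
instance moduleEndLeftOld {C : Type*} [Category C] [Preadditive C] {X : Cᵒᵖ} {Y : C} :
    Module (End X) (unop X ⟶ Y) where
  smul r f := r.unop ≫ f
  one_smul _ := Category.id_comp _
  mul_smul _ _ _ := Category.assoc _ _ _
  smul_add _ _ _ := Preadditive.comp_add _ _ _ _ _ _
  smul_zero _ := Limits.comp_zero
  add_smul _ _ _ := Preadditive.add_comp _ _ _ _ _ _
  zero_smul _ := Limits.zero_comp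

/-- The preadditive coyoneda functor of the older Mathlib, for `X : Cᵒᵖ`. -/
noncomputable def preadditiveCoyonedaObjOld {C : Type*} [Category C] [Preadditive C] (X : Cᵒᵖ) :
    C ⥤ ModuleCat (End X) where
  obj Y := ModuleCat.of _ (unop X ⟶ Y)
  map f := ModuleCat.ofHom
    { toFun := fun g => g ≫ f
      map_add' := fun _ _ => Preadditive.add_comp _ _ _ _ _ _
      map_smul' := fun _ _ => Category.assoc _ _ _ }

section Statement19Aux

variable {Λ}

noncomputable section

/-- A usable copy of `CategoryTheory.moduleEndLeft` whose instance keys fire for `op Y`. -/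
instance modEndOp {C : Type*} [Category C] [Preadditive C] (Y N : C) :
    Module (End (op Y)) (Y ⟶ N) := moduleEndLeftOld (X := op Y)

instance additiveOld {C : Type*} [Category C] [Preadditive C] (X : Cᵒᵖ) :
    (preadditiveCoyonedaObjOld X).Additive where
  map_add {_ _ f g} := by
    apply ModuleCat.hom_ext
    apply LinearMap.ext
    intro x
    exact Preadditive.comp_add _ _ _ _ _ _

variable {M : ModuleCat.{u} Λ}

local notation "F" => preadditiveCoyonedaObjOld (op M)

lemma comp_apply' {R : Type u} [Ring R] {X Y Z : ModuleCat.{u} R} (f : X ⟶ Y) (g : Y ⟶ Z)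
    (x : X) : (f ≫ g) x = g (f x) := rfl

lemma Fmap_apply {N N' : ModuleCat.{u} Λ} (f : N ⟶ N') (x : (F).obj N) :
    (F).map f x = x ≫ f := rfl

/-- `X ≅ ⨁ (fun _ : Fin 1 => X)` -/
def oneIso (X : ModuleCat.{u} Λ) : X ≅ ⨁ (fun _ : Fin 1 => X) where
  hom := biproduct.lift fun _ => 𝟙 X
  inv := biproduct.desc fun _ => 𝟙 X
  hom_inv_id := by simp [biproduct.lift_desc]
  inv_hom_id := by
    apply biproduct.hom_ext
    intro j
    apply biproduct.hom_ext'
    intro i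
    simp [Subsingleton.elim i j]

lemma inAdd_self : InAdd Λ M M :=
  ⟨1, ModuleCat.of Λ PUnit,
    ⟨((isoBiprodZero (ModuleCat.isZero_of_subsingleton _)).symm).trans (oneIso M)⟩⟩

lemma inAdd_biproduct (r : ℕ) : InAdd Λ M (⨁ fun _ : Fin r => M) :=
  ⟨r, ModuleCat.of Λ PUnit,
    ⟨(isoBiprodZero (ModuleCat.isZero_of_subsingleton _)).symm⟩⟩

lemma epi_of_approx (hgen : InAdd Λ M (ModuleCat.of Λ Λ)) {A X : ModuleCat.{u} Λ}
    (g : A ⟶ X)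
    (happrox : ∀ T : ModuleCat.{u} Λ, InAdd Λ M T → ∀ f : T ⟶ X, ∃ h : T ⟶ A, h ≫ g = f) :
    Epi g := by
  obtain ⟨r, Y, ⟨e⟩⟩ := hgen
  set S := ⨁ (fun _ : Fin r => M) with hS
  let ε : S ⟶ ModuleCat.of Λ Λ := e.inv ≫ biprod.fst
  have hsplit : (biprod.inl ≫ e.hom) ≫ ε = 𝟙 _ := by simp [ε]
  haveI : IsSplitEpi ε := IsSplitEpi.mk ⟨biprod.inl ≫ e.hom, hsplit⟩
  have hεsurj : Function.Surjective ε := by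
    rw [← ModuleCat.epi_iff_surjective]
    infer_instance
  rw [ModuleCat.epi_iff_surjective]
  intro x
  let ℓ : ModuleCat.of Λ Λ ⟶ X := ModuleCat.ofHom (LinearMap.toSpanSingleton Λ X x)
  obtain ⟨h, hh⟩ := happrox S (inAdd_biproduct r) (ε ≫ ℓ)
  obtain ⟨w, hw⟩ := hεsurj (1 : Λ)
  refine ⟨h w, ?_⟩
  have h1 : g (h w) = ℓ (ε w) := by
    have := congrArg (fun (f : S ⟶ X) => f w) hh
    simpa using this
  rw [h1, hw]
  exact LinearMap.toSpanSingleton_apply_one Λ X x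

/-- faithfulness from generator -/
lemma hom_ext_of_gen (hgen : InAdd Λ M (ModuleCat.of Λ Λ)) {B C : ModuleCat.{u} Λ} (f : B ⟶ C)
    (h : ∀ u : M ⟶ B, u ≫ f = 0) : f = 0 := by
  obtain ⟨r, Y, ⟨e⟩⟩ := hgen
  set S := ⨁ (fun _ : Fin r => M) with hS
  let ε : S ⟶ ModuleCat.of Λ Λ := e.inv ≫ biprod.fst
  have hsplit : (biprod.inl ≫ e.hom) ≫ ε = 𝟙 _ := by simp [ε]
  haveI : IsSplitEpi ε := IsSplitEpi.mk ⟨biprod.inl ≫ e.hom, hsplit⟩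
  apply ModuleCat.hom_ext
  apply LinearMap.ext
  intro b
  let ℓ : ModuleCat.of Λ Λ ⟶ B := ModuleCat.ofHom (LinearMap.toSpanSingleton Λ B b)
  have key : ℓ ≫ f = 0 := by
    rw [← cancel_epi ε, comp_zero, ← Category.assoc]
    apply biproduct.hom_ext'
    intro j
    simpa using h (biproduct.ι (fun _ : Fin r => M) j ≫ ε ≫ ℓ)
  have h2 : ℓ ((1:Λ)) = b := LinearMap.toSpanSingleton_apply_one Λ B b
  have h3 : f (ℓ (1:Λ)) = (0 : ModuleCat.of Λ Λ ⟶ C) (1:Λ) := by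
    have := congrArg (fun (t : ModuleCat.of Λ Λ ⟶ C) => t (1:Λ)) key
    simpa using this
  rw [h2] at h3
  rw [h3]
  exact LinearMap.zero_apply _

def toEnd (φ : M ⟶ M) : End (op M) := φ.op

lemma smul_eq {N : ModuleCat.{u} Λ} (φ : M ⟶ M) (x : (F).obj N) :
    toEnd φ • x = φ ≫ x := rfl

/-- elements of `F.obj (⨁ M)` decompose -/
lemma decompose (r : ℕ) (z : M ⟶ ⨁ (fun _ : Fin r => M)) :
    z = ∑ j : Fin r, toEnd (z ≫ biproduct.π (fun _ : Fin r => M) j) •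
      ((biproduct.ι (fun _ : Fin r => M) j : M ⟶ _) : (F).obj (⨁ (fun _ : Fin r => M))) := by
  have : ∀ j : Fin r, toEnd (z ≫ biproduct.π (fun _ : Fin r => M) j) •
      ((biproduct.ι (fun _ : Fin r => M) j : M ⟶ _) : (F).obj (⨁ (fun _ : Fin r => M)))
      = z ≫ (biproduct.π (fun _ : Fin r => M) j ≫ biproduct.ι (fun _ : Fin r => M) j) := by
    intro j
    exact Category.assoc _ _ _
  rw [Finset.sum_congr rfl (fun j _ => this j), ← Preadditive.comp_sum, biproduct.total,
    Category.comp_id]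

/-- linear maps out of `F.obj (⨁ M)` are determined on the `ι j` -/
lemma hom_ext_biproduct {r : ℕ} {Z : ModuleCat.{u} (End (op M))}
    (ψ χ : (F).obj (⨁ (fun _ : Fin r => M)) ⟶ Z)
    (h : ∀ j : Fin r, ψ (biproduct.ι (fun _ : Fin r => M) j) =
      χ (biproduct.ι (fun _ : Fin r => M) j)) : ψ = χ := by
  apply ModuleCat.hom_ext
  apply LinearMap.ext
  intro z
  have key : ∀ j : Fin r, ψ.hom (toEnd (z ≫ biproduct.π (fun _ : Fin r => M) j) •
        ((biproduct.ι (fun _ : Fin r => M) j : M ⟶ _) : (F).obj (⨁ (fun _ : Fin r => M)))) = χ.hom (toEnd (z ≫ biproduct.π (fun _ : Fin r => M) j) •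
        ((biproduct.ι (fun _ : Fin r => M) j : M ⟶ _) : (F).obj (⨁ (fun _ : Fin r => M)))) := by
    intro j
    exact (map_smul ψ.hom _ _).trans ((congrArg (fun y =>
      toEnd (z ≫ biproduct.π (fun _ : Fin r => M) j) • y) (h j)).trans (map_smul χ.hom _ _).symm)
  calc ψ.hom z = ψ.hom (∑ j : Fin r, toEnd (z ≫ biproduct.π (fun _ : Fin r => M) j) •
        ((biproduct.ι (fun _ : Fin r => M) j : M ⟶ _) : (F).obj (⨁ (fun _ : Fin r => M)))) := congrArg _ (decompose r z)
    _ = ∑ j : Fin r, ψ.hom (toEnd (z ≫ biproduct.π (fun _ : Fin r => M) j) •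
        ((biproduct.ι (fun _ : Fin r => M) j : M ⟶ _) : (F).obj (⨁ (fun _ : Fin r => M)))) := map_sum _ _ _
    _ = ∑ j : Fin r, χ.hom (toEnd (z ≫ biproduct.π (fun _ : Fin r => M) j) •
        ((biproduct.ι (fun _ : Fin r => M) j : M ⟶ _) : (F).obj (⨁ (fun _ : Fin r => M)))) := Finset.sum_congr rfl fun j _ => key j
    _ = χ.hom (∑ j : Fin r, toEnd (z ≫ biproduct.π (fun _ : Fin r => M) j) •
        ((biproduct.ι (fun _ : Fin r => M) j : M ⟶ _) : (F).obj (⨁ (fun _ : Fin r => M)))) := (map_sum _ _ _).symm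
    _ = χ.hom z := congrArg _ (decompose r z).symm

/-- fullness on `add M` -/
lemma full_of_inAdd {A B : ModuleCat.{u} Λ} (hA : InAdd Λ M A)
    (θ : (F).obj A ⟶ (F).obj B) : ∃ u : A ⟶ B, (F).map u = θ := by
  obtain ⟨r, Y, ⟨e⟩⟩ := hA
  let s : A ⟶ ⨁ (fun _ : Fin r => M) := biprod.inl ≫ e.hom
  let t : (⨁ (fun _ : Fin r => M) : ModuleCat.{u} Λ) ⟶ A := e.inv ≫ biprod.fst
  have hst : s ≫ t = 𝟙 A := by simp [s, t]
  let c : ∀ _ : Fin r, M ⟶ B := fun j => θ (biproduct.ι (fun _ : Fin r => M) j ≫ t)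
  have key : (F).map (biproduct.desc c) = (F).map t ≫ θ := by
    apply hom_ext_biproduct
    intro j
    exact biproduct.ι_desc c j
  refine ⟨s ≫ biproduct.desc c, ?_⟩
  rw [Functor.map_comp, key, ← Category.assoc, ← Functor.map_comp, hst,
    CategoryTheory.Functor.map_id, Category.id_comp]

def regIso : ModuleCat.of (End (op M)) (End (op M)) ≅ (F).obj M :=
  LinearEquiv.toModuleIso
    { toFun := fun r => r.unop
      map_add' := fun _ _ => rfl
      map_smul' := fun s r => by
        show (s * r).unop = s • r.unop
        rw [End.mul_def, unop_comp]
        rfl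
      invFun := fun φ => φ.op
      left_inv := fun _ => rfl
      right_inv := fun _ => rfl }

lemma projective_of_retract {C : Type*} [Category C] {P Q : C} (i : P ⟶ Q) (rr : Q ⟶ P)
    (h : i ≫ rr = 𝟙 P) (hQ : Projective Q) : Projective P where
  factors := fun f e he => by
    haveI := hQ
    exact ⟨i ≫ Projective.factorThru (rr ≫ f) e, by
      rw [Category.assoc, Projective.factorThru_comp, ← Category.assoc, h, Category.id_comp]⟩

lemma projective_biproduct {R : Type u} [Ring R] {r : ℕ} (P : Fin r → ModuleCat.{u} R)
    (h : ∀ j, Projective (P j)) : Projective (⨁ P) where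
  factors := fun f e he => by
    haveI := he
    haveI := fun j => h j
    exact ⟨biproduct.desc fun j => Projective.factorThru (biproduct.ι P j ≫ f) e, by
      apply biproduct.hom_ext'
      intro j
      rw [← Category.assoc, biproduct.ι_desc, Projective.factorThru_comp]⟩

lemma projective_obj {A : ModuleCat.{u} Λ} (hA : InAdd Λ M A) : Projective ((F).obj A) := by
  obtain ⟨r, Y, ⟨e⟩⟩ := hA
  let s : A ⟶ ⨁ (fun _ : Fin r => M) := biprod.inl ≫ e.hom
  let t : (⨁ (fun _ : Fin r => M) : ModuleCat.{u} Λ) ⟶ A := e.inv ≫ biprod.fst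
  have hst : s ≫ t = 𝟙 A := by simp [s, t]
  haveI : Projective (ModuleCat.of (End (op M)) (End (op M))) :=
    ModuleCat.projective_of_free (Module.Basis.singleton PUnit.{u+1} (End (op M)))
  have hM : Projective ((F).obj M) := Projective.of_iso regIso inferInstance
  have hsum : Projective (⨁ ((F).obj ∘ fun _ : Fin r => M)) :=
    projective_biproduct _ (fun _ => hM)
  have hbig : Projective ((F).obj (⨁ fun _ : Fin r => M)) :=
    Projective.of_iso (Functor.mapBiproduct _ _).symm hsum
  exact projective_of_retract ((F).map s) ((F).map t)
    (by rw [← Functor.map_comp, hst, CategoryTheory.Functor.map_id]) hbig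

/-- right-minimality transfers along `F` -/
lemma min_of_min (hgen : InAdd Λ M (ModuleCat.of Λ Λ)) {A X : ModuleCat.{u} Λ} (g : A ⟶ X)
    (hA : InAdd Λ M A) (hmin : ∀ h : A ⟶ A, h ≫ g = g → IsIso h) :
    ∀ h : (F).obj A ⟶ (F).obj A, h ≫ (F).map g = (F).map g → IsIso h := by
  intro h hh
  obtain ⟨h', hh'⟩ := full_of_inAdd hA h
  have hz : ∀ u : M ⟶ A, u ≫ (h' ≫ g - g) = 0 := by
    intro u
    have e1 : ((F).map h' ≫ (F).map g) u = (F).map g u := by rw [hh', hh]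
    have e2 : (u ≫ h') ≫ g = u ≫ g := by
      exact (comp_apply' ((F).map h') ((F).map g) u).symm.trans e1
    rw [Preadditive.comp_sub, ← Category.assoc, e2, sub_self]
  have hzz : h' ≫ g - g = 0 := hom_ext_of_gen hgen _ hz
  have hfix : h' ≫ g = g := by rwa [sub_eq_zero] at hzz
  haveI := hmin h' hfix
  rw [← hh']
  infer_instance

/-- kernel comparison: `F` preserves kernels -/
def kerIso {A X : ModuleCat.{u} Λ} (g : A ⟶ X) : (F).obj (kernel g) ≅ kernel ((F).map g) := by
  let l : (F).obj (kernel g) ⟶ kernel ((F).map g) :=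
    kernel.lift ((F).map g) ((F).map (kernel.ι g))
      (by rw [← Functor.map_comp, kernel.condition, Functor.map_zero])
  have hfac : l ≫ kernel.ι ((F).map g) = (F).map (kernel.ι g) := kernel.lift_ι _ _ _
  haveI hm : Mono ((F).map (kernel.ι g)) := by
    rw [ModuleCat.mono_iff_injective]
    intro a b hab
    rw [Fmap_apply, Fmap_apply] at hab
    exact (cancel_mono (kernel.ι g)).mp hab
  haveI : Mono (l ≫ kernel.ι ((F).map g)) := by rw [hfac]; exact hm
  haveI : Mono l := mono_of_mono l (kernel.ι ((F).map g))
  haveI : Epi l := by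
    rw [ModuleCat.epi_iff_surjective]
    intro q
    have h1 : (F).map g (kernel.ι ((F).map g) q) = 0 := by
      rw [← comp_apply', kernel.condition]
      exact LinearMap.zero_apply q
    have hq : (kernel.ι ((F).map g) q : M ⟶ A) ≫ g = 0 := by
      rw [← Fmap_apply]; exact h1
    refine ⟨(kernel.lift g (kernel.ι ((F).map g) q) hq : M ⟶ kernel g), ?_⟩
    apply (ModuleCat.mono_iff_injective (kernel.ι ((F).map g))).mp inferInstance
    exact (congrArg (fun φ : (F).obj (kernel g) ⟶ (F).obj A =>
      φ (kernel.lift g (kernel.ι ((F).map g) q) hq)) hfac).trans (kernel.lift_ι g _ hq)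
  haveI : IsIso l := isIso_of_mono_of_epi l
  exact asIso l

/-- uniqueness of minimal projective covers, kernel version -/
lemma ker_iso_of_covers {R : Type u} [Ring R] {P P' N : ModuleCat.{u} R} (p : P ⟶ N)
    (p' : P' ⟶ N)
    (hP : Projective P) (hP' : Projective P') (hep : Epi p) (hep' : Epi p')
    (hmin : ∀ h : P ⟶ P, h ≫ p = p → IsIso h)
    (hmin' : ∀ h : P' ⟶ P', h ≫ p' = p' → IsIso h) :
    Nonempty ((kernel p : ModuleCat.{u} R) ≅ kernel p') := by
  haveI := hP; haveI := hP'; haveI := hep; haveI := hep'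
  let α : P ⟶ P' := Projective.factorThru p p'
  have hα : α ≫ p' = p := Projective.factorThru_comp _ _
  let β : P' ⟶ P := Projective.factorThru p' p
  have hβ : β ≫ p = p' := Projective.factorThru_comp _ _
  haveI h1 : IsIso (α ≫ β) := hmin _ (by rw [Category.assoc, hβ, hα])
  haveI h2 : IsIso (β ≫ α) := hmin' _ (by rw [Category.assoc, hα, hβ])
  haveI : Mono α := mono_of_mono α β
  haveI : Epi α := epi_of_epi β α
  haveI : IsIso α := isIso_of_mono_of_epi α
  exact ⟨(kernelIsoOfEq hα.symm).trans (kernelIsIsoComp α p')⟩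

end

end Statement19Aux


/-- if `M` is a generator and `g : M_X ⟶ X` a right minimal
`add M`-approximation, then `g` is surjective, and for all `n ≥ 1` the `n`-th syzygy
of `Hom_Λ(M,X)` over `End_Λ(M)` is `Hom_Λ(M, Ω_M^n(X))`. -/


theorem statement19 (k : Type u) [Field k] (Λ : Type u) [Ring Λ] [Algebra k Λ]
    [FiniteDimensional k Λ]
    (M : ModuleCat.{u} Λ) (hMfin : Module.Finite Λ M)
    (hgen : InAdd Λ M (ModuleCat.of Λ Λ))
    (X : ModuleCat.{u} Λ) (hXfin : Module.Finite Λ X)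
    (A : ModuleCat.{u} Λ) (g : A ⟶ X) (hg : IsRMApprox Λ M g) :
    Epi g ∧
    ∀ (n : ℕ), 1 ≤ n → ∀ (W : ModuleCat.{u} Λ), IsMSyzygy Λ M X n W →
      ∀ Q : ModuleCat.{u} (End (op M)),
        IsSyz (End (op M)) ((preadditiveCoyonedaObjOld (op M)).obj X) n Q →
        Nonempty (Q ≅ (preadditiveCoyonedaObjOld (op M)).obj W) := by
  obtain ⟨hAadd, happrox, hmin⟩ := hg
  constructor
  · exact epi_of_approx hgen g happrox
  · intro n hn W hW Q hQ
    clear hn hMfin hXfin hAadd hmin happrox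
    induction n generalizing W Q with
    | zero =>
      cases hW
      cases hQ
      exact ⟨Iso.refl _⟩
    | succ n ih =>
      cases hW with
      | succ _ W' A' g' hW' hg' =>
        cases hQ with
        | succ _ V P p hP hp hmin' hV =>
          obtain ⟨φ⟩ := ih W' hW' V hV
          obtain ⟨hA'add, happrox', hmin''⟩ := hg'
          have hepi : Epi ((preadditiveCoyonedaObjOld (op M)).map g') := by
            rw [ModuleCat.epi_iff_surjective]
            intro f
            obtain ⟨h, hh⟩ := happrox' M inAdd_self f
            exact ⟨h, hh⟩
          have hproj : Projective ((preadditiveCoyonedaObjOld (op M)).obj A') :=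
            projective_obj hA'add
          have hmin2 : ∀ h, h ≫ (preadditiveCoyonedaObjOld (op M)).map g' =
              (preadditiveCoyonedaObjOld (op M)).map g' → IsIso h :=
            min_of_min hgen g' hA'add hmin''
          haveI : Epi p := hp
          have hpe : Epi (p ≫ φ.hom) := epi_comp _ _
          have hpmin : ∀ h : P ⟶ P, h ≫ (p ≫ φ.hom) = p ≫ φ.hom → IsIso h := by
            intro h hh
            apply hmin' h
            rwa [← Category.assoc, cancel_mono φ.hom] at hh
          obtain ⟨κ⟩ := ker_iso_of_covers (p ≫ φ.hom) ((preadditiveCoyonedaObjOld (op M)).map g')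
            hP hproj hpe hepi hpmin hmin2
          have k1 : (kernel (p ≫ φ.hom) : ModuleCat.{u} (End (op M))) ≅ kernel p :=
            kernelCompMono p φ.hom
          exact ⟨k1.symm.trans (κ.trans (kerIso g').symm)⟩


end Rigidity
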